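/- For complex numbers α₁,…,α_l, ρ with Re ρ > 0, and Λ ∈ ℂ, the following identity holds: e^{(π²i/2ρ)(l−1)(l−2Λ−2)} · Skew( e^{−(π/ρ)Σ_{j=1}^{l−1} α_j} · Π_{j=2}^{l} sinh(π(α_j + Λπi)/ρ) · Π_{j=1}^{l−2} Π_{j'=j+2}^{l} sinh(π(α_{j'} − α_j − πi)/ρ) ) = (1/l!) Π_{1≤j<j'≤l} sinh(π(α_{j'} − α_j)/ρ). -/

import Mathlib

open Finset

namespace Stmt13Aux

abbrev TL (l : ℕ) : Finset (Fin l) := univ.filter (fun i => 1 ≤ (i : ℕ))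
abbrev TP (l : ℕ) : Finset (Fin l × Fin l) :=
  univ.filter (fun p => (p.1 : ℕ) + 2 ≤ (p.2 : ℕ))

lemma card_filter_fin (l : ℕ) (p : ℕ → Prop) [DecidablePred p] :
    ((univ : Finset (Fin l)).filter (fun i : Fin l => p (i : ℕ))).card
      = ((Finset.range l).filter p).card := by
  rw [Finset.card_filter (fun i : Fin l => p (i : ℕ)), Finset.card_filter p,
    ← Fin.sum_univ_eq_sum_range (fun i => if p i then 1 else 0) l]

lemma cTL (l : ℕ) : (TL l).card = l - 1 := by
  rw [TL, card_filter_fin l (fun n => 1 ≤ n)]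
  have : (Finset.range l).filter (fun i => 1 ≤ i) = Finset.Ico 1 l := by
    ext i; simp [Finset.mem_Ico]; omega
  rw [this, Nat.card_Ico]

lemma cBelow (l : ℕ) (m : ℕ) (hm : m < l) :
    ((univ : Finset (Fin l)).filter (fun j : Fin l => (j : ℕ) + 2 ≤ m)).card = m - 1 := by
  rw [card_filter_fin l (fun n => n + 2 ≤ m)]
  have : (Finset.range l).filter (fun j => j + 2 ≤ m) = Finset.range (m - 1) := by
    ext j; simp; omega
  rw [this, Finset.card_range]

lemma card_fiber_snd (l : ℕ) (P : Fin l → Fin l → Prop)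
    [∀ i j, Decidable (P i j)] (i : Fin l) :
    (((univ : Finset (Fin l × Fin l)).filter (fun p => P p.1 p.2)).filter
      (fun p => p.2 = i)).card
      = ((univ : Finset (Fin l)).filter (fun j => P j i)).card := by
  apply Finset.card_bij (fun p _ => p.1)
  · intro p hp
    simp only [Finset.mem_filter, Finset.mem_univ, true_and] at hp ⊢
    rw [← hp.2]; exact hp.1
  · intro p hp q hq h
    simp only [Finset.mem_filter] at hp hq
    exact Prod.ext h (hp.2.trans hq.2.symm)
  · intro j hj
    simp only [Finset.mem_filter, Finset.mem_univ, true_and] at hj ⊢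
    exact ⟨(j, i), ⟨hj, rfl⟩, rfl⟩

lemma card_fiber_fst (l : ℕ) (P : Fin l → Fin l → Prop)
    [∀ i j, Decidable (P i j)] (i : Fin l) :
    (((univ : Finset (Fin l × Fin l)).filter (fun p => P p.1 p.2)).filter
      (fun p => p.1 = i)).card
      = ((univ : Finset (Fin l)).filter (fun j => P i j)).card := by
  apply Finset.card_bij (fun p _ => p.2)
  · intro p hp
    simp only [Finset.mem_filter, Finset.mem_univ, true_and] at hp ⊢
    rw [← hp.2]; exact hp.1
  · intro p hp q hq h
    simp only [Finset.mem_filter] at hp hq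
    exact Prod.ext (hp.2.trans hq.2.symm) h
  · intro j hj
    simp only [Finset.mem_filter, Finset.mem_univ, true_and] at hj ⊢
    exact ⟨(i, j), ⟨hj, rfl⟩, rfl⟩

/-- the exponent function attached to a pair of subsets -/
def expo {l : ℕ} (t1 : Finset (Fin l)) (t2 : Finset (Fin l × Fin l)) (i : Fin l) : ℕ :=
  (if i ∈ t1 then 1 else 0) + (t2.filter (fun p => p.2 = i)).card
    + (((TP l) \ t2).filter (fun p => p.1 = i)).card

lemma keyF {l : ℕ} (t1 : Finset (Fin l)) (t2 : Finset (Fin l × Fin l))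
    (h1 : t1 ⊆ TL l) (h2 : t2 ⊆ TP l)
    (hinj : Function.Injective (expo t1 t2)) : t1 = TL l ∧ t2 = TP l := by
  set e := expo t1 t2 with he
  have step : ∀ m : Fin l,
      (∀ m' : Fin l, (m : ℕ) < (m' : ℕ) →
        ((1 ≤ (m' : ℕ) → m' ∈ t1) ∧ ∀ p ∈ TP l \ t2, p.2 ≠ m')) →
      ((1 ≤ (m : ℕ) → m ∈ t1) ∧ ∀ p ∈ TP l \ t2, p.2 ≠ m) := by
    intro m ih
    have hD : ∀ p ∈ TP l \ t2, (p.2 : ℕ) ≤ (m : ℕ) := by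
      intro p hp
      by_contra hcon
      push_neg at hcon
      exact (ih p.2 hcon).2 p hp rfl
    have hb : ∀ i : Fin l, (i : ℕ) ≤ (m : ℕ) →
        e i ≤ (if 1 ≤ (i:ℕ) then 1 else 0) + ((i:ℕ) - 1) + ((m:ℕ) - (i:ℕ) - 1) := by
      intro i _
      have hind : (if i ∈ t1 then 1 else 0) ≤ (if 1 ≤ (i:ℕ) then 1 else 0) := by
        split_ifs with hA hB
        · exact le_refl 1
        · exfalso; exact hB (by simpa [TL, Finset.mem_filter] using h1 hA)
        · exact Nat.zero_le 1
        · exact le_refl 0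
      have hA : (t2.filter (fun p => p.2 = i)).card ≤ (i:ℕ) - 1 := by
        calc (t2.filter (fun p => p.2 = i)).card
            ≤ ((TP l).filter (fun p => p.2 = i)).card :=
              Finset.card_le_card (Finset.filter_subset_filter _ h2)
          _ = ((univ : Finset (Fin l)).filter (fun j : Fin l => (j:ℕ) + 2 ≤ (i:ℕ))).card :=
              card_fiber_snd l (fun x y => (x:ℕ)+2 ≤ (y:ℕ)) i
          _ = (i:ℕ) - 1 := cBelow l i i.isLt
      have hB : (((TP l) \ t2).filter (fun p => p.1 = i)).card ≤ (m:ℕ) - (i:ℕ) - 1 := by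
        calc (((TP l) \ t2).filter (fun p => p.1 = i)).card
            ≤ ((univ : Finset (Fin l)).filter
                (fun j : Fin l => (i:ℕ)+2 ≤ (j:ℕ) ∧ (j:ℕ) ≤ (m:ℕ))).card := by
              apply Finset.card_le_card_of_injOn (fun p => p.2)
              · intro p hp
                simp only [Finset.mem_coe, Finset.mem_filter] at hp ⊢
                obtain ⟨hpD, hpi⟩ := hp
                have h1' : (p.1:ℕ)+2 ≤ (p.2:ℕ) := by
                  have := (Finset.mem_sdiff.1 hpD).1
                  simpa [TP, Finset.mem_filter] using this
                have h2' := hD p hpD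
                simp only [Finset.mem_filter, Finset.mem_univ, true_and]
                exact ⟨by rw [← hpi]; exact h1', h2'⟩
              · intro p hp q hq hpq
                simp only [Finset.coe_filter, Set.mem_setOf_eq] at hp hq
                exact Prod.ext (hp.2.trans hq.2.symm) hpq
          _ ≤ (m:ℕ) - (i:ℕ) - 1 := by
              rw [card_filter_fin l (fun n => (i:ℕ)+2 ≤ n ∧ n ≤ (m:ℕ))]
              calc ((Finset.range l).filter (fun n => (i:ℕ)+2 ≤ n ∧ n ≤ (m:ℕ))).card
                  ≤ (Finset.Icc ((i:ℕ)+2) (m:ℕ)).card := by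
                    apply Finset.card_le_card
                    intro x hx
                    simp only [Finset.mem_filter, Finset.mem_range] at hx
                    simp only [Finset.mem_Icc]
                    omega
                _ ≤ (m:ℕ) - (i:ℕ) - 1 := by rw [Nat.card_Icc]; omega
      exact Nat.add_le_add (Nat.add_le_add hind hA) hB
    have hem : e m = (m : ℕ) := by
      have hle : e m ≤ (m : ℕ) := by
        have := hb m le_rfl
        split_ifs at this <;> omega
      by_contra hne
      have hlt : e m < (m : ℕ) := lt_of_le_of_ne hle hne
      have hmaps : ∀ i ∈ (univ : Finset (Fin l)).filter (fun i : Fin l => (i:ℕ) ≤ (m:ℕ)),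
          e i ∈ Finset.range (m : ℕ) := by
        intro i hi
        simp only [Finset.mem_filter, Finset.mem_univ, true_and] at hi
        rcases lt_or_eq_of_le hi with h | h
        · have := hb i (le_of_lt h)
          simp only [Finset.mem_range]
          split_ifs at this <;> omega
        · have : i = m := Fin.ext h
          subst this
          simpa [Finset.mem_range] using hlt
      have hcard : (Finset.range (m:ℕ)).card
          < ((univ : Finset (Fin l)).filter (fun i : Fin l => (i:ℕ) ≤ (m:ℕ))).card := by
        rw [Finset.card_range, card_filter_fin l (fun n => n ≤ (m:ℕ))]
        have : (Finset.range l).filter (fun n => n ≤ (m:ℕ)) = Finset.range ((m:ℕ)+1) := by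
          ext x
          simp only [Finset.mem_filter, Finset.mem_range]
          have := m.isLt; omega
        rw [this, Finset.card_range]; omega
      obtain ⟨x, hx, y, hy, hxy, hexy⟩ :=
        Finset.exists_ne_map_eq_of_card_lt_of_maps_to hcard hmaps
      exact hxy (hinj hexy)
    have hBm : (((TP l) \ t2).filter (fun p => p.1 = m)).card = 0 := by
      rw [Finset.card_eq_zero, Finset.filter_eq_empty_iff]
      intro p hp hpm
      have h1' : (p.1:ℕ)+2 ≤ (p.2:ℕ) := by
        have := (Finset.mem_sdiff.1 hp).1
        simpa [TP, Finset.mem_filter] using this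
      have h2' := hD p hp
      rw [hpm] at h1'
      omega
    have hAm : ((TP l).filter (fun p => p.2 = m)).card = (m:ℕ) - 1 := by
      rw [card_fiber_snd l (fun x y => (x:ℕ)+2 ≤ (y:ℕ)) m]
      exact cBelow l m m.isLt
    have hAle : (t2.filter (fun p => p.2 = m)).card ≤ (m:ℕ) - 1 := by
      calc (t2.filter (fun p => p.2 = m)).card
          ≤ ((TP l).filter (fun p => p.2 = m)).card :=
            Finset.card_le_card (Finset.filter_subset_filter _ h2)
        _ = (m:ℕ) - 1 := hAm
    have hdecomp : e m = (if m ∈ t1 then 1 else 0) + (t2.filter (fun p => p.2 = m)).card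
        + (((TP l) \ t2).filter (fun p => p.1 = m)).card := rfl
    constructor
    · intro hm1
      by_contra hmt
      rw [if_neg hmt] at hdecomp
      omega
    · intro p hp hpm
      have hsub : t2.filter (fun q => q.2 = m) ⊆ (TP l).filter (fun q => q.2 = m) :=
        Finset.filter_subset_filter _ h2
      have hind1 : (if m ∈ t1 then 1 else 0) ≤ 1 := by split_ifs <;> omega
      have heq : t2.filter (fun q => q.2 = m) = (TP l).filter (fun q => q.2 = m) :=
        Finset.eq_of_subset_of_card_le hsub (by omega)
      have hpTP : p ∈ (TP l).filter (fun q => q.2 = m) := by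
        rw [Finset.mem_filter]
        exact ⟨(Finset.mem_sdiff.1 hp).1, hpm⟩
      rw [← heq] at hpTP
      exact (Finset.mem_sdiff.1 hp).2 (Finset.mem_filter.1 hpTP).1
  have main : ∀ n : ℕ, ∀ m : Fin l, l - (m:ℕ) ≤ n →
      ((1 ≤ (m : ℕ) → m ∈ t1) ∧ ∀ p ∈ TP l \ t2, p.2 ≠ m) := by
    intro n
    induction n with
    | zero => intro m hm; exfalso; have := m.isLt; omega
    | succ n ih =>
      intro m _
      apply step m
      intro m' hm'
      exact ih m' (by have := m'.isLt; have := m.isLt; omega)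
  have hQ : ∀ m : Fin l, (1 ≤ (m : ℕ) → m ∈ t1) ∧ ∀ p ∈ TP l \ t2, p.2 ≠ m :=
    fun m => main l m (by omega)
  constructor
  · apply Finset.Subset.antisymm h1
    intro i hi
    exact (hQ i).1 (by simpa [TL, Finset.mem_filter] using hi)
  · apply Finset.Subset.antisymm h2
    intro p hp
    by_contra hpt
    exact (hQ p.2).2 p (Finset.mem_sdiff.2 ⟨hp, hpt⟩) rfl


lemma sum_sign_pow_eq_zero (l : ℕ) (y : Fin l → ℂ) (e : Fin l → ℕ)
    (h : ¬ Function.Injective e) :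
    ∑ σ : Equiv.Perm (Fin l), ((Equiv.Perm.sign σ : ℤ) : ℂ) * ∏ i : Fin l, y (σ i) ^ e i
      = 0 := by
  obtain ⟨i, j, hij, hne⟩ : ∃ i j, e i = e j ∧ i ≠ j := by
    unfold Function.Injective at h
    push_neg at h
    obtain ⟨a, b, h1, h2⟩ := h
    exact ⟨a, b, h1, h2⟩
  set τ := Equiv.swap i j with hτ
  set f : Equiv.Perm (Fin l) → ℂ :=
    fun σ => ((Equiv.Perm.sign σ : ℤ) : ℂ) * ∏ i : Fin l, y (σ i) ^ e i with hf
  have key : ∀ σ : Equiv.Perm (Fin l), f (σ * τ) = - f σ := by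
    intro σ
    have hs : Equiv.Perm.sign (σ * τ) = - Equiv.Perm.sign σ := by
      rw [Equiv.Perm.sign_mul, Equiv.Perm.sign_swap hne, mul_neg_one]
    have heτ : ∀ k, e (τ k) = e k := by
      intro k
      rcases eq_or_ne k i with rfl | hki
      · rw [hτ, Equiv.swap_apply_left, ← hij]
      rcases eq_or_ne k j with rfl | hkj
      · rw [hτ, Equiv.swap_apply_right, hij]
      · rw [hτ, Equiv.swap_apply_of_ne_of_ne hki hkj]
    have hp : ∏ k : Fin l, y ((σ * τ) k) ^ e k = ∏ k : Fin l, y (σ k) ^ e k := by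
      calc ∏ k : Fin l, y ((σ * τ) k) ^ e k
          = ∏ k : Fin l, y (σ (τ k)) ^ e (τ (τ k)) := by
            apply Finset.prod_congr rfl
            intro k _
            rw [hτ, Equiv.swap_apply_self]
            rfl
        _ = ∏ k : Fin l, y (σ k) ^ e (τ k) :=
            Equiv.prod_comp τ (fun k => y (σ k) ^ e (τ k))
        _ = ∏ k : Fin l, y (σ k) ^ e k := by
            apply Finset.prod_congr rfl
            intro k _
            rw [heτ k]
    rw [hf]
    simp only [hs, hp]
    push_cast
    ring
  have hsum : ∑ σ : Equiv.Perm (Fin l), f σ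
      = ∑ σ : Equiv.Perm (Fin l), f (σ * τ) :=
    (Equiv.sum_comp (Equiv.mulRight τ) f).symm
  have h2 : ∑ σ : Equiv.Perm (Fin l), f σ = - ∑ σ : Equiv.Perm (Fin l), f σ := by
    calc ∑ σ : Equiv.Perm (Fin l), f σ = ∑ σ : Equiv.Perm (Fin l), f (σ * τ) := hsum
      _ = ∑ σ : Equiv.Perm (Fin l), (- f σ) := by
          apply Finset.sum_congr rfl
          intro σ _
          exact key σ
      _ = - ∑ σ : Equiv.Perm (Fin l), f σ := by rw [Finset.sum_neg_distrib]
  linear_combination h2 / 2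

lemma sum_sign_pow_stair (l : ℕ) (y : Fin l → ℂ) :
    ∑ σ : Equiv.Perm (Fin l), ((Equiv.Perm.sign σ : ℤ) : ℂ) * ∏ i : Fin l, y (σ i) ^ (i : ℕ)
      = ∏ p ∈ (univ : Finset (Fin l × Fin l)).filter (fun p => p.1 < p.2), (y p.2 - y p.1) := by
  have hdet := Matrix.det_vandermonde y
  rw [Matrix.det_apply] at hdet
  have hL : ∑ σ : Equiv.Perm (Fin l),
      Equiv.Perm.sign σ • ∏ i : Fin l, Matrix.vandermonde y (σ i) i
      = ∑ σ : Equiv.Perm (Fin l), ((Equiv.Perm.sign σ : ℤ) : ℂ) * ∏ i : Fin l, y (σ i) ^ (i : ℕ) := by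
    apply Finset.sum_congr rfl
    intro σ _
    rw [Units.smul_def, zsmul_eq_mul]
    congr 1
  have hR : ∏ i : Fin l, ∏ j ∈ Finset.Ioi i, (y j - y i)
      = ∏ p ∈ (univ : Finset (Fin l × Fin l)).filter (fun p => p.1 < p.2), (y p.2 - y p.1) := by
    calc ∏ i : Fin l, ∏ j ∈ Finset.Ioi i, (y j - y i)
        = ∏ i : Fin l, ∏ j : Fin l, (if i < j then y j - y i else 1) := by
          apply Finset.prod_congr rfl
          intro i _
          rw [← Finset.prod_filter]
          apply Finset.prod_congr _ (fun _ _ => rfl)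
          ext j
          simp [Finset.mem_Ioi]
      _ = ∏ p ∈ (univ : Finset (Fin l)) ×ˢ (univ : Finset (Fin l)),
            (if p.1 < p.2 then y p.2 - y p.1 else 1) :=
          (Finset.prod_product' univ univ (fun i j => if i < j then y j - y i else 1)).symm
      _ = ∏ p ∈ (univ : Finset (Fin l × Fin l)).filter (fun p => p.1 < p.2), (y p.2 - y p.1) := by
          rw [Finset.univ_product_univ, ← Finset.prod_filter]
  rw [← hL, hdet, hR]

lemma prod_mem_pow {l : ℕ} (t : Finset (Fin l)) (g : Fin l → ℂ) :
    ∏ i ∈ t, g i = ∏ i : Fin l, g i ^ (if i ∈ t then 1 else 0) := by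
  have : ∀ i : Fin l, g i ^ (if i ∈ t then 1 else 0) = (if i ∈ t then g i else 1) := by
    intro i; split_ifs <;> simp
  rw [Finset.prod_congr rfl (fun i _ => this i), Finset.prod_ite_mem,
    Finset.univ_inter]

lemma prod_snd_pow {l : ℕ} (s : Finset (Fin l × Fin l)) (g : Fin l → ℂ) :
    ∏ p ∈ s, g p.2 = ∏ i : Fin l, g i ^ (s.filter (fun p => p.2 = i)).card := by
  rw [← Finset.prod_fiberwise_of_maps_to (t := univ) (g := Prod.snd)
    (fun _ _ => Finset.mem_univ _) (fun p => g p.2)]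
  apply Finset.prod_congr rfl
  intro i _
  rw [Finset.prod_congr rfl (g := fun _ => g i)
    (fun p hp => by rw [(Finset.mem_filter.1 hp).2]), Finset.prod_const]

lemma prod_fst_pow {l : ℕ} (s : Finset (Fin l × Fin l)) (g : Fin l → ℂ) :
    ∏ p ∈ s, g p.1 = ∏ i : Fin l, g i ^ (s.filter (fun p => p.1 = i)).card := by
  rw [← Finset.prod_fiberwise_of_maps_to (t := univ) (g := Prod.fst)
    (fun _ _ => Finset.mem_univ _) (fun p => g p.1)]
  apply Finset.prod_congr rfl
  intro i _
  rw [Finset.prod_congr rfl (g := fun _ => g i)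
    (fun p hp => by rw [(Finset.mem_filter.1 hp).2]), Finset.prod_const]

lemma expo_full {l : ℕ} (i : Fin l) : expo (TL l) (TP l) i = (i : ℕ) := by
  unfold expo
  rw [Finset.sdiff_self, Finset.filter_empty, Finset.card_empty,
    card_fiber_snd l (fun x y => (x:ℕ)+2 ≤ (y:ℕ)) i, cBelow l i i.isLt]
  by_cases h : 1 ≤ (i : ℕ)
  · rw [if_pos (by simp [TL, Finset.mem_filter]; omega)]
    omega
  · rw [if_neg (by simp [TL, Finset.mem_filter]; omega)]
    omega

theorem keyA (l : ℕ) (a c : ℂ) (y : Fin l → ℂ) :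
    (∑ σ : Equiv.Perm (Fin l), ((Equiv.Perm.sign σ : ℤ) : ℂ) *
      ((∏ i ∈ TL l, (y (σ i) - a)) *
       ∏ p ∈ TP l, (y (σ p.2) - c * y (σ p.1))))
    = ∏ p ∈ (univ : Finset (Fin l × Fin l)).filter (fun p => p.1 < p.2), (y p.2 - y p.1) := by
  have expand : ∀ σ : Equiv.Perm (Fin l),
      ((Equiv.Perm.sign σ : ℤ) : ℂ) *
        ((∏ i ∈ TL l, (y (σ i) - a)) * ∏ p ∈ TP l, (y (σ p.2) - c * y (σ p.1)))
      = ∑ t1 ∈ (TL l).powerset, ∑ t2 ∈ (TP l).powerset,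
          ((-a) ^ (TL l \ t1).card * (-c) ^ (TP l \ t2).card) *
            (((Equiv.Perm.sign σ : ℤ) : ℂ) * ∏ i : Fin l, y (σ i) ^ (expo t1 t2 i)) := by
    intro σ
    have e1 : ∏ i ∈ TL l, (y (σ i) - a)
        = ∑ t1 ∈ (TL l).powerset, (-a) ^ (TL l \ t1).card * ∏ i ∈ t1, y (σ i) := by
      calc ∏ i ∈ TL l, (y (σ i) - a) = ∏ i ∈ TL l, (y (σ i) + (-a)) := by
            apply Finset.prod_congr rfl; intros; ring
        _ = ∑ t1 ∈ (TL l).powerset, (∏ i ∈ t1, y (σ i)) * ∏ _i ∈ TL l \ t1, (-a) :=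
            Finset.prod_add _ _ _
        _ = _ := by
            apply Finset.sum_congr rfl
            intro t1 _
            rw [Finset.prod_const]
            ring
    have e2 : ∏ p ∈ TP l, (y (σ p.2) - c * y (σ p.1))
        = ∑ t2 ∈ (TP l).powerset, (-c) ^ (TP l \ t2).card *
            ((∏ p ∈ t2, y (σ p.2)) * ∏ p ∈ TP l \ t2, y (σ p.1)) := by
      calc ∏ p ∈ TP l, (y (σ p.2) - c * y (σ p.1))
          = ∏ p ∈ TP l, (y (σ p.2) + (-c) * y (σ p.1)) := by
            apply Finset.prod_congr rfl; intros; ring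
        _ = ∑ t2 ∈ (TP l).powerset, (∏ p ∈ t2, y (σ p.2)) *
              ∏ p ∈ TP l \ t2, (-c) * y (σ p.1) :=
            Finset.prod_add _ _ _
        _ = _ := by
            apply Finset.sum_congr rfl
            intro t2 _
            rw [Finset.prod_mul_distrib, Finset.prod_const]
            ring
    rw [e1, e2, Finset.sum_mul_sum]
    rw [Finset.mul_sum]
    apply Finset.sum_congr rfl
    intro t1 ht1
    rw [Finset.mul_sum]
    apply Finset.sum_congr rfl
    intro t2 ht2
    have hmono : (∏ i ∈ t1, y (σ i)) * ((∏ p ∈ t2, y (σ p.2)) * ∏ p ∈ TP l \ t2, y (σ p.1))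
        = ∏ i : Fin l, y (σ i) ^ (expo t1 t2 i) := by
      rw [prod_mem_pow t1 (fun i => y (σ i)), prod_snd_pow t2 (fun i => y (σ i)),
        prod_fst_pow (TP l \ t2) (fun i => y (σ i)), ← Finset.prod_mul_distrib,
        ← Finset.prod_mul_distrib]
      apply Finset.prod_congr rfl
      intro i _
      rw [← pow_add, ← pow_add]
      congr 1
      unfold expo
      omega
    rw [← hmono]
    ring
  rw [Finset.sum_congr rfl (fun σ _ => expand σ)]
  rw [Finset.sum_comm]
  rw [Finset.sum_congr rfl (fun t1 _ => Finset.sum_comm)]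
  have inner : ∀ t1 ∈ (TL l).powerset, ∀ t2 ∈ (TP l).powerset,
      ∑ σ : Equiv.Perm (Fin l),
        ((-a) ^ (TL l \ t1).card * (-c) ^ (TP l \ t2).card) *
          (((Equiv.Perm.sign σ : ℤ) : ℂ) * ∏ i : Fin l, y (σ i) ^ (expo t1 t2 i))
      = ((-a) ^ (TL l \ t1).card * (-c) ^ (TP l \ t2).card) *
          ∑ σ : Equiv.Perm (Fin l),
            ((Equiv.Perm.sign σ : ℤ) : ℂ) * ∏ i : Fin l, y (σ i) ^ (expo t1 t2 i) := by
    intro t1 _ t2 _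
    rw [Finset.mul_sum]
  rw [Finset.sum_congr rfl (fun t1 ht1 => Finset.sum_congr rfl (fun t2 ht2 => inner t1 ht1 t2 ht2))]
  rw [Finset.sum_eq_single_of_mem (TL l) (Finset.mem_powerset_self _)]
  rotate_left
  · intro t1 ht1 hne
    apply Finset.sum_eq_zero
    intro t2 ht2
    rw [sum_sign_pow_eq_zero l y (expo t1 t2), mul_zero]
    intro hinj
    exact hne (keyF t1 t2 (Finset.mem_powerset.1 ht1) (Finset.mem_powerset.1 ht2) hinj).1
  rw [Finset.sum_eq_single_of_mem (TP l) (Finset.mem_powerset_self _)]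
  rotate_left
  · intro t2 ht2 hne
    rw [sum_sign_pow_eq_zero l y (expo (TL l) t2), mul_zero]
    intro hinj
    exact hne (keyF (TL l) t2 (Finset.Subset.refl _) (Finset.mem_powerset.1 ht2) hinj).2
  rw [Finset.sdiff_self, Finset.sdiff_self]
  simp only [Finset.card_empty, pow_zero, one_mul]
  rw [Finset.sum_congr rfl (fun σ _ => by
    rw [Finset.prod_congr rfl (fun i (_ : i ∈ univ) => by rw [expo_full i])])]
  exact sum_sign_pow_stair l y

abbrev T0 (l : ℕ) : Finset (Fin l) := univ.filter (fun i : Fin l => (i : ℕ) < l - 1)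
abbrev TAdj (l : ℕ) : Finset (Fin l × Fin l) :=
  univ.filter (fun p => (p.1 : ℕ) + 1 = (p.2 : ℕ))
abbrev Tlt (l : ℕ) : Finset (Fin l × Fin l) := univ.filter (fun p => p.1 < p.2)

lemma split_lt (l : ℕ) : Tlt l = TAdj l ∪ TP l := by
  rw [TAdj, TP, ← Finset.filter_or]
  apply Finset.filter_congr
  intro p _
  rw [Fin.lt_def]
  constructor
  · intro h; omega
  · intro h; omega

lemma disj_adj (l : ℕ) : Disjoint (TAdj l) (TP l) := by
  rw [Finset.disjoint_left]
  intro p hp hq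
  simp only [TAdj, TP, Finset.mem_filter, Finset.mem_univ, true_and] at hp hq
  omega

lemma prod_adj_fst {l : ℕ} (f : Fin l → ℂ) :
    ∏ p ∈ TAdj l, f p.1 = ∏ i ∈ T0 l, f i := by
  apply Finset.prod_bij (fun p _ => p.1)
  · intro p hp
    simp only [TAdj, Finset.mem_filter, Finset.mem_univ, true_and] at hp
    simp only [T0, Finset.mem_filter, Finset.mem_univ, true_and]
    have := p.2.isLt
    omega
  · intro p hp q hq h
    simp only [TAdj, Finset.mem_filter, Finset.mem_univ, true_and] at hp hq
    apply Prod.ext h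
    apply Fin.ext
    rw [← hp, ← hq, h]
  · intro i hi
    simp only [T0, Finset.mem_filter, Finset.mem_univ, true_and] at hi
    refine ⟨(i, ⟨(i : ℕ) + 1, by omega⟩), ?_, rfl⟩
    simp only [TAdj, Finset.mem_filter, Finset.mem_univ, true_and]
  · intro p _
    rfl

lemma prod_adj_snd {l : ℕ} (f : Fin l → ℂ) :
    ∏ p ∈ TAdj l, f p.2 = ∏ i ∈ TL l, f i := by
  apply Finset.prod_bij (fun p _ => p.2)
  · intro p hp
    simp only [TAdj, Finset.mem_filter, Finset.mem_univ, true_and] at hp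
    simp only [TL, Finset.mem_filter, Finset.mem_univ, true_and]
    omega
  · intro p hp q hq h
    simp only [TAdj, Finset.mem_filter, Finset.mem_univ, true_and] at hp hq
    refine Prod.ext ?_ h
    apply Fin.ext
    rw [h] at hp
    omega
  · intro i hi
    simp only [TL, Finset.mem_filter, Finset.mem_univ, true_and] at hi
    refine ⟨(⟨(i : ℕ) - 1, by have := i.isLt; omega⟩, i), ?_, rfl⟩
    simp only [TAdj, Finset.mem_filter, Finset.mem_univ, true_and]
    omega
  · intro p _
    rfl

lemma card_adj (l : ℕ) : (TAdj l).card = l - 1 := by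
  have h : (TAdj l).card = (T0 l).card := by
    apply Finset.card_bij (fun p _ => p.1)
    · intro p hp
      simp only [TAdj, Finset.mem_filter, Finset.mem_univ, true_and] at hp
      simp only [T0, Finset.mem_filter, Finset.mem_univ, true_and]
      have := p.2.isLt
      omega
    · intro p hp q hq h
      simp only [TAdj, Finset.mem_filter, Finset.mem_univ, true_and] at hp hq
      apply Prod.ext h
      apply Fin.ext
      rw [← hp, ← hq, h]
    · intro i hi
      simp only [T0, Finset.mem_filter, Finset.mem_univ, true_and] at hi
      refine ⟨(i, ⟨(i : ℕ) + 1, by omega⟩), ?_, rfl⟩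
      simp only [TAdj, Finset.mem_filter, Finset.mem_univ, true_and]
  rw [h, T0, card_filter_fin l (fun n => n < l - 1)]
  have : (Finset.range l).filter (fun n => n < l - 1) = Finset.range (l - 1) := by
    ext x; simp; omega
  rw [this, Finset.card_range]

lemma cLtSnd {l : ℕ} (i : Fin l) :
    ((Tlt l).filter (fun p => p.2 = i)).card = (i : ℕ) := by
  have h1 : Tlt l = univ.filter (fun p : Fin l × Fin l => (p.1 : ℕ) < (p.2 : ℕ)) := by
    apply Finset.filter_congr
    intro p _
    rw [Fin.lt_def]
  rw [h1, card_fiber_snd l (fun x y => (x:ℕ) < (y:ℕ)) i,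
    card_filter_fin l (fun n => n < (i:ℕ))]
  have : (Finset.range l).filter (fun n => n < (i:ℕ)) = Finset.range (i:ℕ) := by
    ext x; simp; have := i.isLt; omega
  rw [this, Finset.card_range]

lemma cLtFst {l : ℕ} (i : Fin l) :
    ((Tlt l).filter (fun p => p.1 = i)).card = l - 1 - (i : ℕ) := by
  have h1 : Tlt l = univ.filter (fun p : Fin l × Fin l => (p.1 : ℕ) < (p.2 : ℕ)) := by
    apply Finset.filter_congr
    intro p _
    rw [Fin.lt_def]
  rw [h1, card_fiber_fst l (fun x y => (x:ℕ) < (y:ℕ)) i,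
    card_filter_fin l (fun n => (i:ℕ) < n)]
  have : (Finset.range l).filter (fun n => (i:ℕ) < n) = Finset.Ico ((i:ℕ)+1) l := by
    ext x; simp [Finset.mem_Ico]; omega
  rw [this, Nat.card_Ico]
  omega

lemma pairprod {l : ℕ} (f : Fin l → ℂ) :
    ∏ p ∈ Tlt l, (f p.1 * f p.2) = (∏ i : Fin l, f i) ^ (l - 1) := by
  rw [Finset.prod_mul_distrib, prod_fst_pow (Tlt l) f, prod_snd_pow (Tlt l) f,
    ← Finset.prod_mul_distrib]
  calc ∏ i : Fin l, f i ^ ((Tlt l).filter (fun p => p.1 = i)).card *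
        f i ^ ((Tlt l).filter (fun p => p.2 = i)).card
      = ∏ i : Fin l, f i ^ (l - 1) := by
        apply Finset.prod_congr rfl
        intro i _
        rw [← pow_add, cLtFst i, cLtSnd i]
        congr 1
        have := i.isLt
        omega
    _ = (∏ i : Fin l, f i) ^ (l - 1) := Finset.prod_pow _ _ _

lemma sum_sub_one : ∀ l : ℕ, ∑ i ∈ Finset.range l, (i - 1) = ∑ i ∈ Finset.range (l - 1), i := by
  intro l
  induction l with
  | zero => simp
  | succ n ih =>
    rw [Finset.sum_range_succ, ih]
    cases n with
    | zero => simp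
    | succ k =>
      simp only [Nat.succ_sub_one]
      rw [Finset.sum_range_succ]

lemma cardTP (l : ℕ) : 2 * (TP l).card = (l - 1) * (l - 2) := by
  have h1 : (TP l).card = ∑ i : Fin l, ((TP l).filter (fun p => p.2 = i)).card :=
    Finset.card_eq_sum_card_fiberwise (fun p _ => Finset.mem_univ p.2)
  have h2 : ∀ i : Fin l, ((TP l).filter (fun p => p.2 = i)).card = (i : ℕ) - 1 := by
    intro i
    rw [card_fiber_snd l (fun x y => (x:ℕ)+2 ≤ (y:ℕ)) i]
    exact cBelow l i i.isLt
  rw [h1, Finset.sum_congr rfl (fun i _ => h2 i),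
    Fin.sum_univ_eq_sum_range (fun n => n - 1) l, sum_sub_one l,
    Nat.mul_comm, Finset.sum_range_id_mul_two (l - 1)]
  congr 1

lemma phase_eq (l : ℕ) (hl : 1 ≤ l) (ρ Λ x : ℂ) (n2 : ℕ) (hn2 : 2 * n2 = (l - 1) * (l - 2)) :
    Complex.exp (x / (2 * ρ) * ((l : ℂ) - 1) * ((l : ℂ) - 2 * Λ - 2)) *
      Complex.exp (Λ * x / ρ) ^ (l - 1) * Complex.exp (-(x / ρ)) ^ n2 = 1 := by
  rw [← Complex.exp_nat_mul, ← Complex.exp_nat_mul, ← Complex.exp_add, ← Complex.exp_add]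
  have hgoal : x / (2 * ρ) * ((l : ℂ) - 1) * ((l : ℂ) - 2 * Λ - 2)
      + ((l - 1 : ℕ) : ℂ) * (Λ * x / ρ) + ((n2 : ℕ) : ℂ) * (-(x / ρ)) = 0 := by
    have hc1 : ((l - 1 : ℕ) : ℂ) = (l : ℂ) - 1 := by
      rw [Nat.cast_sub hl]; norm_num
    have hn2' : 2 * ((n2 : ℕ) : ℂ) = ((l - 1 : ℕ) : ℂ) * ((l - 2 : ℕ) : ℂ) := by
      exact_mod_cast congrArg (Nat.cast : ℕ → ℂ) hn2
    by_cases hl2 : 2 ≤ l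
    · have hc2 : ((l - 2 : ℕ) : ℂ) = (l : ℂ) - 2 := by
        rw [Nat.cast_sub hl2]; norm_num
      rw [hc1, hc2] at hn2'
      rw [hc1]
      linear_combination (-(x) / (2 * ρ)) * hn2'
    · have hl1 : l = 1 := by omega
      subst hl1
      have : n2 = 0 := by omega
      subst this
      norm_num
  rw [hgoal, Complex.exp_zero]

lemma sinh_unfold (t : ℂ) : Complex.sinh t = (Complex.exp t - Complex.exp (-t)) / 2 := rfl

lemma fac1 (π ρ Λ x : ℂ) :
    Complex.sinh (π * (x + Λ * π * Complex.I) / ρ)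
      = (Complex.exp (π * x / ρ))⁻¹ * Complex.exp (Λ * π ^ 2 * Complex.I / ρ) * 2⁻¹ *
        ((Complex.exp (π * x / ρ)) ^ 2
          - (Complex.exp (Λ * π ^ 2 * Complex.I / ρ) * Complex.exp (Λ * π ^ 2 * Complex.I / ρ))⁻¹) := by
  rw [sinh_unfold]
  have h1 : π * (x + Λ * π * Complex.I) / ρ = π * x / ρ + Λ * π ^ 2 * Complex.I / ρ := by
    ring
  rw [h1, neg_add, Complex.exp_add, Complex.exp_add, Complex.exp_neg, Complex.exp_neg]
  have hU := Complex.exp_ne_zero (π * x / ρ)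
  have hW := Complex.exp_ne_zero (Λ * π ^ 2 * Complex.I / ρ)
  field_simp

lemma fac2 (π ρ x1 x2 : ℂ) :
    Complex.sinh (π * (x2 - x1 - π * Complex.I) / ρ)
      = (Complex.exp (π * x1 / ρ))⁻¹ * (Complex.exp (π * x2 / ρ))⁻¹ *
          Complex.exp (-(π ^ 2 * Complex.I / ρ)) * 2⁻¹ *
        ((Complex.exp (π * x2 / ρ)) ^ 2
          - (Complex.exp (π ^ 2 * Complex.I / ρ) * Complex.exp (π ^ 2 * Complex.I / ρ)) *
            (Complex.exp (π * x1 / ρ)) ^ 2) := by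
  rw [sinh_unfold]
  have h1 : π * (x2 - x1 - π * Complex.I) / ρ
      = π * x2 / ρ - (π * x1 / ρ + π ^ 2 * Complex.I / ρ) := by
    ring
  rw [h1, Complex.exp_sub, Complex.exp_add, neg_sub, Complex.exp_sub, Complex.exp_add,
    Complex.exp_neg (π ^ 2 * Complex.I / ρ)]
  have hU1 := Complex.exp_ne_zero (π * x1 / ρ)
  have hU2 := Complex.exp_ne_zero (π * x2 / ρ)
  have hQ := Complex.exp_ne_zero (π ^ 2 * Complex.I / ρ)
  field_simp

lemma fac3 (π ρ x1 x2 : ℂ) :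
    Complex.sinh (π * (x2 - x1) / ρ)
      = (Complex.exp (π * x1 / ρ))⁻¹ * (Complex.exp (π * x2 / ρ))⁻¹ * 2⁻¹ *
        ((Complex.exp (π * x2 / ρ)) ^ 2 - (Complex.exp (π * x1 / ρ)) ^ 2) := by
  rw [sinh_unfold]
  have h1 : π * (x2 - x1) / ρ = π * x2 / ρ - π * x1 / ρ := by ring
  rw [h1, Complex.exp_sub, neg_sub, Complex.exp_sub]
  have hU1 := Complex.exp_ne_zero (π * x1 / ρ)
  have hU2 := Complex.exp_ne_zero (π * x2 / ρ)
  field_simp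

lemma facE {l : ℕ} (π ρ : ℂ) (β : Fin l → ℂ) :
    Complex.exp (-(π / ρ) * ∑ i ∈ T0 l, β i) = ∏ i ∈ T0 l, (Complex.exp (π * β i / ρ))⁻¹ := by
  rw [show -(π / ρ) * ∑ i ∈ T0 l, β i = ∑ i ∈ T0 l, -(π * β i / ρ) by
    rw [Finset.mul_sum]; apply Finset.sum_congr rfl; intros; ring]
  rw [Complex.exp_sum]
  exact Finset.prod_congr rfl fun i _ => Complex.exp_neg _

lemma phase_eq' (l : ℕ) (hl : 1 ≤ l) (ρ Λ π : ℂ) :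
    Complex.exp (π ^ 2 * Complex.I / (2 * ρ) * ((l : ℂ) - 1) * ((l : ℂ) - 2 * Λ - 2)) *
      Complex.exp (Λ * π ^ 2 * Complex.I / ρ) ^ ((TL l).card) *
      Complex.exp (-(π ^ 2 * Complex.I / ρ)) ^ ((TP l).card) = 1 := by
  rw [cTL]
  have h := phase_eq l hl ρ Λ (π ^ 2 * Complex.I) ((TP l).card) (cardTP l)
  rw [show Λ * (π ^ 2 * Complex.I) / ρ = Λ * π ^ 2 * Complex.I / ρ by ring] at h
  exact h

lemma main_pairs {l : ℕ} (u : Fin l → ℂ) (σ : Equiv.Perm (Fin l)) :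
    (∏ i ∈ T0 l, (u (σ i))⁻¹) * ((∏ i ∈ TL l, (u (σ i))⁻¹) *
      ((∏ p ∈ TP l, (u (σ p.1))⁻¹) * ∏ p ∈ TP l, (u (σ p.2))⁻¹))
    = (∏ p ∈ Tlt l, (u p.1)⁻¹) * ∏ p ∈ Tlt l, (u p.2)⁻¹ := by
  have key : ∀ v : Fin l → ℂ,
      (∏ p ∈ Tlt l, (v p.1)⁻¹) * ∏ p ∈ Tlt l, (v p.2)⁻¹
      = (∏ i ∈ T0 l, (v i)⁻¹) * ((∏ i ∈ TL l, (v i)⁻¹) *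
          ((∏ p ∈ TP l, (v p.1)⁻¹) * ∏ p ∈ TP l, (v p.2)⁻¹)) := by
    intro v
    rw [split_lt, Finset.prod_union (disj_adj l), Finset.prod_union (disj_adj l),
      prod_adj_fst (fun i => (v i)⁻¹), prod_adj_snd (fun i => (v i)⁻¹)]
    ring
  have hp : ∀ v : Fin l → ℂ,
      (∏ p ∈ Tlt l, (v p.1)⁻¹) * ∏ p ∈ Tlt l, (v p.2)⁻¹
        = (∏ i : Fin l, (v i)⁻¹) ^ (l - 1) := by
    intro v
    rw [← Finset.prod_mul_distrib]
    exact pairprod (fun i => (v i)⁻¹)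
  rw [← key (fun i => u (σ i))]
  rw [hp (fun i => u (σ i)), hp u]
  congr 1
  exact Equiv.prod_comp σ (fun i => (u i)⁻¹)

theorem stmt13' (l : ℕ) (hl : 1 ≤ l) (ρ Λ : ℂ) (α : Fin l → ℂ) :
    Complex.exp (((Real.pi : ℂ) ^ 2 * Complex.I / (2 * ρ)) * ((l : ℂ) - 1) * ((l : ℂ) - 2 * Λ - 2)) *
        ((1 / (l.factorial : ℂ)) * ∑ σ : Equiv.Perm (Fin l), (Equiv.Perm.sign σ : ℤ) *
          (Complex.exp (-((Real.pi : ℂ) / ρ) * ∑ i ∈ T0 l, α (σ i)) *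
            (∏ i ∈ TL l,
              Complex.sinh ((Real.pi : ℂ) * (α (σ i) + Λ * Real.pi * Complex.I) / ρ)) *
            ∏ p ∈ TP l,
              Complex.sinh ((Real.pi : ℂ) * (α (σ p.2) - α (σ p.1) - Real.pi * Complex.I) / ρ)))
      = (1 / (l.factorial : ℂ)) * ∏ p ∈ Tlt l,
          Complex.sinh ((Real.pi : ℂ) * (α p.2 - α p.1) / ρ) := by
  set π : ℂ := (Real.pi : ℂ) with hπ
  set u : Fin l → ℂ := fun i => Complex.exp (π * α i / ρ) with hu
  set Y : Fin l → ℂ := fun i => (Complex.exp (π * α i / ρ)) ^ 2 with hY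
  set W : ℂ := Complex.exp (Λ * π ^ 2 * Complex.I / ρ) with hW
  set E2 : ℂ := Complex.exp (-(π ^ 2 * Complex.I / ρ)) with hE2
  set Q : ℂ := Complex.exp (π ^ 2 * Complex.I / ρ) with hQ
  set phase : ℂ := Complex.exp (π ^ 2 * Complex.I / (2 * ρ) * ((l : ℂ) - 1) * ((l : ℂ) - 2 * Λ - 2)) with hphase
  have hstep : ∀ σ : Equiv.Perm (Fin l),
      phase * (Complex.exp (-(π / ρ) * ∑ i ∈ T0 l, α (σ i)) *
        (∏ i ∈ TL l, Complex.sinh (π * (α (σ i) + Λ * π * Complex.I) / ρ)) *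
        ∏ p ∈ TP l, Complex.sinh (π * (α (σ p.2) - α (σ p.1) - π * Complex.I) / ρ))
      = ((∏ p ∈ Tlt l, ((u p.1)⁻¹ * (u p.2)⁻¹)) * (2⁻¹ : ℂ) ^ ((Tlt l).card)) *
        ((∏ i ∈ TL l, (Y (σ i) - (W * W)⁻¹)) *
          ∏ p ∈ TP l, (Y (σ p.2) - (Q * Q) * Y (σ p.1))) := by
    intro σ
    rw [facE π ρ (fun i => α (σ i))]
    rw [Finset.prod_congr rfl (fun i (_ : i ∈ TL l) => fac1 π ρ Λ (α (σ i)))]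
    rw [Finset.prod_congr rfl (fun p (_ : p ∈ TP l) => fac2 π ρ (α (σ p.1)) (α (σ p.2)))]
    simp only [Finset.prod_mul_distrib, Finset.prod_const]
    have hu' : ∀ x, Complex.exp (π * α x / ρ) = u x := fun x => rfl
    have hY2 : ∀ x, u x ^ 2 = Y x := fun x => rfl
    rw [← hW, ← hE2, ← hQ]
    simp only [hu', hY2]
    have hA := phase_eq' l hl ρ Λ π
    rw [← hW, ← hE2, ← hphase] at hA
    have hB := main_pairs u σ
    have hcard : (Tlt l).card = (TL l).card + (TP l).card := by
      rw [split_lt, Finset.card_union_of_disjoint (disj_adj l), card_adj, cTL]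
    rw [hcard, pow_add]
    calc phase * ((∏ i ∈ T0 l, (u (σ i))⁻¹) *
          ((∏ i ∈ TL l, (u (σ i))⁻¹) * W ^ (TL l).card * (2⁻¹ : ℂ) ^ (TL l).card *
            ∏ i ∈ TL l, (Y (σ i) - (W * W)⁻¹)) *
          ((∏ p ∈ TP l, (u (σ p.1))⁻¹) * (∏ p ∈ TP l, (u (σ p.2))⁻¹) * E2 ^ (TP l).card *
            (2⁻¹ : ℂ) ^ (TP l).card * ∏ p ∈ TP l, (Y (σ p.2) - (Q * Q) * Y (σ p.1))))
        = (phase * W ^ (TL l).card * E2 ^ (TP l).card) *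
            (((∏ i ∈ T0 l, (u (σ i))⁻¹) * ((∏ i ∈ TL l, (u (σ i))⁻¹) *
              ((∏ p ∈ TP l, (u (σ p.1))⁻¹) * ∏ p ∈ TP l, (u (σ p.2))⁻¹))) *
            ((2⁻¹ : ℂ) ^ (TL l).card * (2⁻¹ : ℂ) ^ (TP l).card) *
            ((∏ i ∈ TL l, (Y (σ i) - (W * W)⁻¹)) *
              ∏ p ∈ TP l, (Y (σ p.2) - (Q * Q) * Y (σ p.1)))) := by ring
      _ = _ := by
          rw [hA, hB, one_mul, ← Finset.prod_mul_distrib]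
  calc phase * ((1 / (l.factorial : ℂ)) * ∑ σ : Equiv.Perm (Fin l), (Equiv.Perm.sign σ : ℤ) *
        (Complex.exp (-(π / ρ) * ∑ i ∈ T0 l, α (σ i)) *
          (∏ i ∈ TL l, Complex.sinh (π * (α (σ i) + Λ * π * Complex.I) / ρ)) *
          ∏ p ∈ TP l, Complex.sinh (π * (α (σ p.2) - α (σ p.1) - π * Complex.I) / ρ)))
      = (1 / (l.factorial : ℂ)) * ∑ σ : Equiv.Perm (Fin l), ((Equiv.Perm.sign σ : ℤ) : ℂ) *
          (phase * (Complex.exp (-(π / ρ) * ∑ i ∈ T0 l, α (σ i)) *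
            (∏ i ∈ TL l, Complex.sinh (π * (α (σ i) + Λ * π * Complex.I) / ρ)) *
            ∏ p ∈ TP l, Complex.sinh (π * (α (σ p.2) - α (σ p.1) - π * Complex.I) / ρ))) := by
        rw [mul_comm phase, mul_assoc]
        congr 1
        rw [Finset.sum_mul]
        apply Finset.sum_congr rfl
        intro σ _
        ring
    _ = (1 / (l.factorial : ℂ)) * ∑ σ : Equiv.Perm (Fin l), ((Equiv.Perm.sign σ : ℤ) : ℂ) *
          (((∏ p ∈ Tlt l, ((u p.1)⁻¹ * (u p.2)⁻¹)) * (2⁻¹ : ℂ) ^ ((Tlt l).card)) *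
            ((∏ i ∈ TL l, (Y (σ i) - (W * W)⁻¹)) *
              ∏ p ∈ TP l, (Y (σ p.2) - (Q * Q) * Y (σ p.1)))) := by
        apply congrArg
        apply Finset.sum_congr rfl
        intro σ _
        rw [hstep σ]
    _ = (1 / (l.factorial : ℂ)) * (((∏ p ∈ Tlt l, ((u p.1)⁻¹ * (u p.2)⁻¹)) * (2⁻¹ : ℂ) ^ ((Tlt l).card)) *
          ∑ σ : Equiv.Perm (Fin l), ((Equiv.Perm.sign σ : ℤ) : ℂ) *
            ((∏ i ∈ TL l, (Y (σ i) - (W * W)⁻¹)) *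
              ∏ p ∈ TP l, (Y (σ p.2) - (Q * Q) * Y (σ p.1)))) := by
        congr 1
        rw [Finset.mul_sum]
        apply Finset.sum_congr rfl
        intro σ _
        ring
    _ = (1 / (l.factorial : ℂ)) * (((∏ p ∈ Tlt l, ((u p.1)⁻¹ * (u p.2)⁻¹)) * (2⁻¹ : ℂ) ^ ((Tlt l).card)) *
          ∏ p ∈ Tlt l, (Y p.2 - Y p.1)) := by
        rw [keyA l ((W * W)⁻¹) (Q * Q) Y]
    _ = (1 / (l.factorial : ℂ)) * ∏ p ∈ Tlt l,
          Complex.sinh (π * (α p.2 - α p.1) / ρ) := by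
        apply congrArg
        rw [← Finset.prod_const, ← Finset.prod_mul_distrib, ← Finset.prod_mul_distrib]
        apply Finset.prod_congr rfl
        intro p _
        rw [fac3 π ρ (α p.1) (α p.2)]

end Stmt13Aux


theorem stmt13 (l : ℕ) (hl : 1 ≤ l) (ρ Λ : ℂ) (hρ : 0 < ρ.re) (α : Fin l → ℂ) :
    let F : (Fin l → ℂ) → ℂ := fun β =>
      Complex.exp (-((Real.pi : ℂ) / ρ)
          * ∑ i ∈ Finset.univ.filter (fun i : Fin l => (i : ℕ) < l - 1), β i) *
      (∏ i ∈ Finset.univ.filter (fun i : Fin l => 1 ≤ (i : ℕ)),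
        Complex.sinh ((Real.pi : ℂ) * (β i + Λ * Real.pi * Complex.I) / ρ)) *
      ∏ p ∈ Finset.univ.filter (fun p : Fin l × Fin l => (p.1 : ℕ) + 2 ≤ (p.2 : ℕ)),
        Complex.sinh ((Real.pi : ℂ) * (β p.2 - β p.1 - Real.pi * Complex.I) / ρ)
    Complex.exp (((Real.pi : ℂ) ^ 2 * Complex.I / (2 * ρ)) * ((l : ℂ) - 1) * ((l : ℂ) - 2 * Λ - 2)) *
        ((1 / (l.factorial : ℂ)) * ∑ σ : Equiv.Perm (Fin l), (Equiv.Perm.sign σ : ℤ) * F (α ∘ σ))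
      = (1 / (l.factorial : ℂ)) * ∏ p ∈ Finset.univ.filter (fun p : Fin l × Fin l => p.1 < p.2),
          Complex.sinh ((Real.pi : ℂ) * (α p.2 - α p.1) / ρ) := by
  intro F
  exact Stmt13Aux.stmt13' l hl ρ Λ α
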